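/- arXiv:2412.07866 — 7 statements merged into one kernel-verified Lean document; each statement's English description precedes it below -/
import Mathlib

section
/- For every real number a > 0 and every x0 ∈ ℝ, the weighted length of the unit interval centered at x0 does not exceed that of the unit interval centered at 2x0: ∫_{x0-1}^{x0+1} |t|^a dt ≤ ∫_{2x0-1}^{2x0+1} |t|^a dt, with equality when x0 = 0. -/
open MeasureTheory

/-- For every `a > 0` and `x0 ∈ ℝ`, the `|t|^a`-weighted length of the unit interval
centered at `x0` does not exceed that of the unit interval centered at `2 * x0`,
with equality when `x0 = 0`. -/
theorem stmt_0 (a : ℝ) (ha : 0 < a) (x0 : ℝ) :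
    (∫ t in Set.Ioo (x0 - 1) (x0 + 1), |t| ^ a) ≤
      ∫ t in Set.Ioo (2 * x0 - 1) (2 * x0 + 1), |t| ^ a ∧
    (x0 = 0 →
      (∫ t in Set.Ioo (x0 - 1) (x0 + 1), |t| ^ a) =
        ∫ t in Set.Ioo (2 * x0 - 1) (2 * x0 + 1), |t| ^ a) := by
  set f : ℝ → ℝ := fun t => |t| ^ a with hfdef
  have hfc : Continuous f := by
    apply Continuous.rpow_const continuous_abs
    intro t; right; exact ha.le
  set G : ℝ → ℝ := fun y => ∫ t in (0:ℝ)..y, f t with hGdef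
  have hG : ∀ y, HasDerivAt G (f y) y := fun y =>
    intervalIntegral.integral_hasDerivAt_right (hfc.intervalIntegrable 0 y)
      (hfc.stronglyMeasurableAtFilter _ _) hfc.continuousAt
  set F : ℝ → ℝ := fun x => G (x + 1) - G (x - 1) with hFdef
  have hFint : ∀ x : ℝ, F x = ∫ t in (x - 1)..(x + 1), f t := by
    intro x
    rw [hFdef]
    exact intervalIntegral.integral_interval_sub_left (hfc.intervalIntegrable _ _)
      (hfc.intervalIntegrable _ _)
  have hF : ∀ x, HasDerivAt F (f (x + 1) - f (x - 1)) x := by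
    intro x
    have h1 : HasDerivAt (fun x : ℝ => G (x + 1)) (f (x + 1)) x := by
      have := (hG (x + 1)).comp x ((hasDerivAt_id x).add_const 1)
      simpa [Function.comp_def] using this
    have h2 : HasDerivAt (fun x : ℝ => G (x - 1)) (f (x - 1)) x := by
      have := (hG (x - 1)).comp x ((hasDerivAt_id x).sub_const 1)
      simpa [Function.comp_def] using this
    exact h1.sub h2
  have hmono : MonotoneOn F (Set.Ici 0) := by
    apply monotoneOn_of_deriv_nonneg (convex_Ici 0)
    · exact fun x _ => ((hF x).differentiableAt).continuousAt.continuousWithinAt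
    · intro x _
      exact (hF x).differentiableAt.differentiableWithinAt
    · intro x hx
      rw [(hF x).deriv]
      have hx0 : (0:ℝ) < x := by simpa [interior_Ici] using hx
      have habs : |x - 1| ≤ |x + 1| := by
        rw [abs_of_pos (by linarith : (0:ℝ) < x + 1)]
        exact abs_le.2 ⟨by linarith, by linarith⟩
      have : f (x - 1) ≤ f (x + 1) :=
        Real.rpow_le_rpow (abs_nonneg _) habs ha.le
      linarith
  have hsymm : ∀ x : ℝ, F (-x) = F x := by
    intro x
    rw [hFint, hFint]
    have : (∫ t in (x - 1)..(x + 1), f (-t)) = ∫ t in (-(x+1))..(-(x-1)), f t :=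
      intervalIntegral.integral_comp_neg f
    simp only [hfdef, abs_neg] at this
    rw [show (-x - 1 : ℝ) = -(x + 1) by ring, show (-x + 1 : ℝ) = -(x - 1) by ring]
    exact this.symm
  have hIoo : ∀ c : ℝ, (∫ t in Set.Ioo (c - 1) (c + 1), |t| ^ a) = F c := by
    intro c
    rw [hFint, intervalIntegral.integral_of_le (by linarith), integral_Ioc_eq_integral_Ioo]
  refine ⟨?_, ?_⟩
  · rw [hIoo, hIoo]
    rcases le_or_gt 0 x0 with h | h
    · exact hmono (Set.mem_Ici.2 h) (Set.mem_Ici.2 (by linarith)) (by linarith)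
    · calc F x0 = F (-x0) := by rw [← hsymm (-x0), neg_neg]
        _ ≤ F (-(2 * x0)) := hmono (Set.mem_Ici.2 (by linarith)) (Set.mem_Ici.2 (by linarith)) (by linarith)
        _ = F (2 * x0) := hsymm _
  · intro h; subst h; norm_num
end

section
/- Let N ≥ 1. For every real number a > 0 and every x0 ∈ ℝ^N, one has ∫_{B_1(x0)} ‖x‖^a dx ≤ ∫_{B_1(2x0)} ‖x‖^a dx, i.e. w_a(B_1(x0)) ≤ w_a(B_1(2x0)), with equality when x0 = 0. -/
open MeasureTheory
open scoped RealInnerProductSpace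

/-- For `a > 0` and `x0 ∈ ℝ^N`, `w_a(B_1(x0)) ≤ w_a(B_1(2x0))`, with equality when `x0 = 0`. -/
theorem stmt_1 (N : ℕ) (hN : 1 ≤ N) (a : ℝ) (ha : 0 < a)
    (x0 : EuclideanSpace ℝ (Fin N)) :
    (∫ x in Metric.ball x0 1, ‖x‖ ^ a) ≤
      ∫ x in Metric.ball ((2 : ℝ) • x0) 1, ‖x‖ ^ a ∧
    (x0 = 0 →
      (∫ x in Metric.ball x0 1, ‖x‖ ^ a) =
        ∫ x in Metric.ball ((2 : ℝ) • x0) 1, ‖x‖ ^ a) := by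
  refine ⟨?_, fun h => by subst h; simp⟩
  by_cases hx0 : x0 = 0
  · subst hx0; simp
  -- notation
  set f : EuclideanSpace ℝ (Fin N) → ℝ := fun x => ‖x‖ ^ a with hfdef
  have hf_cont : Continuous f := continuous_norm.rpow_const fun x => Or.inr ha.le
  have hf_nonneg : ∀ x, 0 ≤ f x := fun x => Real.rpow_nonneg (norm_nonneg x) a
  have hc : (0:ℝ) < ‖x0‖ ^ 2 := pow_pos (norm_pos_iff.mpr hx0) 2
  set c : ℝ := ‖x0‖ ^ 2 with hcdef
  -- the reflection L across the hyperplane orthogonal to x0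
  set L : EuclideanSpace ℝ (Fin N) ≃ₗᵢ[ℝ] EuclideanSpace ℝ (Fin N) :=
    ((ℝ ∙ x0).reflection).trans (LinearIsometryEquiv.neg ℝ) with hLdef
  have hL : ∀ x, L x = x - ((2 * ⟪x, x0⟫ / c) • x0) := by
    intro x
    have hproj : (ℝ ∙ x0).starProjection x
        = (⟪x, x0⟫ / c) • x0 := by
      rw [Submodule.starProjection_singleton, real_inner_comm]
      norm_num [hcdef]
    simp only [hLdef, LinearIsometryEquiv.trans_apply, LinearIsometryEquiv.coe_neg,
      Submodule.reflection_apply, hproj]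
    rw [neg_sub]
    module
  -- the affine reflection R across the hyperplane {⟪x,x0⟫ = 3c/2}
  set R : EuclideanSpace ℝ (Fin N) → EuclideanSpace ℝ (Fin N) :=
    fun x => L x + (3:ℝ) • x0 with hRdef
  have hR : ∀ x, R x = x + (3 - 2 * ⟪x, x0⟫ / c) • x0 := by
    intro x
    simp only [hRdef, hL]
    module
  have hRcont : Continuous R := L.continuous.add continuous_const
  have hRmp : MeasurePreserving R volume volume :=
    (measurePreserving_add_right volume ((3:ℝ) • x0)).comp L.measurePreserving
  have hRemb : MeasurableEmbedding R :=
    ((Homeomorph.addRight ((3:ℝ) • x0)).measurableEmbedding).comp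
      L.toHomeomorph.measurableEmbedding
  -- squared-norm formula
  have hsq : ∀ (x : EuclideanSpace ℝ (Fin N)) (t : ℝ),
      ‖x + t • x0‖ ^ 2 = ‖x‖ ^ 2 + 2 * t * ⟪x, x0⟫ + t ^ 2 * c := by
    intro x t
    rw [norm_add_sq_real, real_inner_smul_right, norm_smul]
    rw [mul_pow, Real.norm_eq_abs, sq_abs, hcdef]
    ring
  have norm_eq_of_sq : ∀ u v : EuclideanSpace ℝ (Fin N), ‖u‖ ^ 2 = ‖v‖ ^ 2 → ‖u‖ = ‖v‖ := by
    intro u v h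
    exact (sq_eq_sq₀ (norm_nonneg u) (norm_nonneg v)).mp h
  -- key identities for R
  have h1 : ∀ x, ‖R x - (2:ℝ) • x0‖ = ‖x - x0‖ := by
    intro x
    have e1 : R x - (2:ℝ) • x0 = x + (1 - 2 * ⟪x, x0⟫ / c) • x0 := by rw [hR]; module
    have e2 : x - x0 = x + (-1 : ℝ) • x0 := by module
    refine norm_eq_of_sq _ _ ?_
    rw [e1, e2, hsq, hsq]
    field_simp
    ring
  have h2 : ∀ x, ‖R x - x0‖ = ‖x - (2:ℝ) • x0‖ := by
    intro x
    have e1 : R x - x0 = x + (2 - 2 * ⟪x, x0⟫ / c) • x0 := by rw [hR]; module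
    have e2 : x - (2:ℝ) • x0 = x + (-2 : ℝ) • x0 := by module
    refine norm_eq_of_sq _ _ ?_
    rw [e1, e2, hsq, hsq]
    field_simp
    ring
  have h3 : ∀ x, 2 * ⟪x, x0⟫ ≤ 3 * c → ‖x‖ ≤ ‖R x‖ := by
    intro x hx
    have hsq3 : ‖x‖ ^ 2 ≤ ‖R x‖ ^ 2 := by
      rw [hR, hsq]
      have key : 2 * (3 - 2 * ⟪x, x0⟫ / c) * ⟪x, x0⟫ + (3 - 2 * ⟪x, x0⟫ / c) ^ 2 * c
          = 3 * (3 * c - 2 * ⟪x, x0⟫) := by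
        field_simp
        ring
      linarith
    calc ‖x‖ = Real.sqrt (‖x‖ ^ 2) := (Real.sqrt_sq (norm_nonneg _)).symm
      _ ≤ Real.sqrt (‖R x‖ ^ 2) := Real.sqrt_le_sqrt hsq3
      _ = ‖R x‖ := Real.sqrt_sq (norm_nonneg _)
  -- sets
  set B : Set (EuclideanSpace ℝ (Fin N)) := Metric.ball x0 1 with hBdef
  set B' : Set (EuclideanSpace ℝ (Fin N)) := Metric.ball ((2:ℝ) • x0) 1 with hB'def
  have hBmeas : MeasurableSet B := Metric.isOpen_ball.measurableSet
  have hB'meas : MeasurableSet B' := Metric.isOpen_ball.measurableSet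
  have hDmeas : MeasurableSet (B \ B') := hBmeas.diff hB'meas
  have hintB : IntegrableOn f B volume :=
    (hf_cont.continuousOn.integrableOn_compact (isCompact_closedBall x0 1)).mono_set
      Metric.ball_subset_closedBall
  have hintB' : IntegrableOn f B' volume :=
    (hf_cont.continuousOn.integrableOn_compact (isCompact_closedBall ((2:ℝ) • x0) 1)).mono_set
      Metric.ball_subset_closedBall
  -- membership facts on D := B \ B'
  have hDs : ∀ x ∈ B \ B', 2 * ⟪x, x0⟫ ≤ 3 * c := by
    rintro x ⟨hxB, hxB'⟩
    have hlt : ‖x - x0‖ < 1 := by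
      rw [hBdef, Metric.mem_ball, dist_eq_norm] at hxB; exact hxB
    have hge : (1:ℝ) ≤ ‖x - (2:ℝ) • x0‖ := by
      rw [hB'def, Metric.mem_ball, dist_eq_norm, not_lt] at hxB'; exact hxB'
    have hsqcmp : ‖x - x0‖ ^ 2 ≤ ‖x - (2:ℝ) • x0‖ ^ 2 := by
      have h0 : (0:ℝ) ≤ ‖x - x0‖ := norm_nonneg _
      nlinarith
    have e1 : x - x0 = x + (-1 : ℝ) • x0 := by module
    have e2 : x - (2:ℝ) • x0 = x + (-2 : ℝ) • x0 := by module
    rw [e1, e2, hsq, hsq] at hsqcmp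
    linarith
  have hRD_B' : ∀ x ∈ B \ B', R x ∈ B' := by
    rintro x ⟨hxB, _⟩
    rw [hB'def, Metric.mem_ball, dist_eq_norm, h1]
    rw [hBdef, Metric.mem_ball, dist_eq_norm] at hxB
    exact hxB
  have hRD_nB : ∀ x ∈ B \ B', R x ∉ B := by
    rintro x ⟨_, hxB'⟩ hmem
    rw [hBdef, Metric.mem_ball, dist_eq_norm, h2] at hmem
    rw [hB'def, Metric.mem_ball, dist_eq_norm] at hxB'
    exact hxB' hmem
  -- the chain of (in)equalities
  have step1 : ∫ x in B, f x = (∫ x in B ∩ B', f x) + ∫ x in B \ B', f x := by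
    rw [← setIntegral_union (Set.disjoint_sdiff_right.mono_left Set.inter_subset_right) hDmeas
      (hintB.mono_set Set.inter_subset_left) (hintB.mono_set Set.diff_subset),
      Set.inter_union_diff]
  have step2 : (∫ x in B \ B', f x) ≤ ∫ x in B \ B', f (R x) := by
    refine setIntegral_mono_on (hintB.mono_set Set.diff_subset) ?_ hDmeas ?_
    · exact ((hf_cont.comp hRcont).continuousOn.integrableOn_compact
        (isCompact_closedBall x0 1)).mono_set
        (Set.diff_subset.trans Metric.ball_subset_closedBall)
    · intro x hx
      exact Real.rpow_le_rpow (norm_nonneg x) (h3 x (hDs x hx)) ha.le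
  have step3 : (∫ x in B \ B', f (R x)) = ∫ y in R '' (B \ B'), f y :=
    (hRmp.setIntegral_image_emb hRemb f (B \ B')).symm
  have himg_sub : R '' (B \ B') ⊆ B' \ B := by
    rintro - ⟨x, hx, rfl⟩
    exact ⟨hRD_B' x hx, hRD_nB x hx⟩
  have step4 : (∫ x in B ∩ B', f x) + (∫ y in R '' (B \ B'), f y)
      = ∫ x in (B ∩ B') ∪ R '' (B \ B'), f x := by
    refine (setIntegral_union ?_ (hRemb.measurableSet_image.mpr hDmeas)
      (hintB'.mono_set Set.inter_subset_right)
      (hintB'.mono_set (himg_sub.trans Set.diff_subset))).symm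
    exact Set.disjoint_left.mpr fun x hx hx' => (himg_sub hx').2 hx.1
  have step5 : (∫ x in (B ∩ B') ∪ R '' (B \ B'), f x) ≤ ∫ x in B', f x := by
    refine setIntegral_mono_set hintB' (Filter.Eventually.of_forall fun x => hf_nonneg x) ?_
    refine HasSubset.Subset.eventuallyLE ?_
    exact Set.union_subset Set.inter_subset_right (himg_sub.trans Set.diff_subset)
  calc (∫ x in B, f x) = (∫ x in B ∩ B', f x) + ∫ x in B \ B', f x := step1
    _ ≤ (∫ x in B ∩ B', f x) + ∫ x in B \ B', f (R x) := by linarith [step2]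
    _ = (∫ x in B ∩ B', f x) + ∫ y in R '' (B \ B'), f y := by rw [step3]
    _ = ∫ x in (B ∩ B') ∪ R '' (B \ B'), f x := step4
    _ ≤ ∫ x in B', f x := step5
end

section
/- Let N ≥ 1, a > 0 and x0 ∈ ℝ^N. Then the weighted measure of the part of B_1(x0) lying outside B_1(2x0) does not exceed that of the part of B_1(2x0) lying outside B_1(x0): ∫_{B_1(x0) \ B_1(2x0)} ‖x‖^a dx ≤ ∫_{B_1(2x0) \ B_1(x0)} ‖x‖^a dx. -/
open MeasureTheory

set_option maxHeartbeats 1000000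

/-- For `a > 0` and `x0 ∈ ℝ^N`,
`w_a(B_1(x0) \ B_1(2x0)) ≤ w_a(B_1(2x0) \ B_1(x0))`. -/
theorem stmt_5 (N : ℕ) (hN : 1 ≤ N) (a : ℝ) (ha : 0 < a)
    (x0 : EuclideanSpace ℝ (Fin N)) :
    (∫ x in Metric.ball x0 1 \ Metric.ball ((2 : ℝ) • x0) 1, ‖x‖ ^ a) ≤
      ∫ x in Metric.ball ((2 : ℝ) • x0) 1 \ Metric.ball x0 1, ‖x‖ ^ a := by
  set S1 := Metric.ball x0 1 \ Metric.ball ((2 : ℝ) • x0) 1 with hS1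
  set S2 := Metric.ball ((2 : ℝ) • x0) 1 \ Metric.ball x0 1 with hS2
  have hmp : MeasurePreserving (fun x : EuclideanSpace ℝ (Fin N) => (3:ℝ) • x0 - x)
      volume volume := Measure.measurePreserving_sub_left volume ((3:ℝ) • x0)
  have hemb : MeasurableEmbedding (fun x : EuclideanSpace ℝ (Fin N) => (3:ℝ) • x0 - x) :=
    (Homeomorph.subLeft ((3:ℝ) • x0)).measurableEmbedding
  have hcont : Continuous fun x : EuclideanSpace ℝ (Fin N) => ‖x‖ ^ a :=
    continuous_norm.rpow_const fun x => Or.inr ha.le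
  have d1 : ∀ x : EuclideanSpace ℝ (Fin N),
      dist ((3:ℝ) • x0 - x) ((2:ℝ) • x0) = dist x x0 := by
    intro x
    rw [dist_eq_norm, dist_eq_norm,
      show (3:ℝ) • x0 - x - (2:ℝ) • x0 = -(x - x0) by module, norm_neg]
  have d2 : ∀ x : EuclideanSpace ℝ (Fin N),
      dist ((3:ℝ) • x0 - x) x0 = dist x ((2:ℝ) • x0) := by
    intro x
    rw [dist_eq_norm, dist_eq_norm,
      show (3:ℝ) • x0 - x - x0 = -(x - (2:ℝ) • x0) by module, norm_neg]
  have hsub : S1 ⊆ (fun x : EuclideanSpace ℝ (Fin N) => (3:ℝ) • x0 - x) ⁻¹' S2 := by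
    intro x hx
    obtain ⟨h1, h2⟩ := hx
    rw [Metric.mem_ball] at h1
    rw [Metric.mem_ball, not_lt] at h2
    refine ⟨?_, ?_⟩
    · show dist ((3:ℝ) • x0 - x) ((2:ℝ) • x0) < 1
      rw [d1]; exact h1
    · show ¬ dist ((3:ℝ) • x0 - x) x0 < 1
      rw [not_lt, d2]; exact h2
  have hpt : ∀ x ∈ S1, ‖x‖ ^ a ≤ ‖(3:ℝ) • x0 - x‖ ^ a := by
    intro x hx
    obtain ⟨h1, h2⟩ := hx
    rw [Metric.mem_ball, dist_eq_norm] at h1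
    rw [Metric.mem_ball, not_lt, dist_eq_norm] at h2
    refine Real.rpow_le_rpow (norm_nonneg _) ?_ ha.le
    have e1 : ‖x - x0‖ ^ 2 = ‖x‖ ^ 2 - 2 * inner ℝ x x0 + ‖x0‖ ^ 2 :=
      @norm_sub_sq_real (EuclideanSpace ℝ (Fin N)) _ _ x x0
    have e2 : ‖x - (2:ℝ) • x0‖ ^ 2 = ‖x‖ ^ 2 - 2 * ((2:ℝ) * inner ℝ x x0) + (2:ℝ)^2 * ‖x0‖ ^ 2 := by
      rw [@norm_sub_sq_real (EuclideanSpace ℝ (Fin N)) _ _ x ((2:ℝ) • x0),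
        real_inner_smul_right, norm_smul]
      norm_num
      ring
    have e3 : ‖(3:ℝ) • x0 - x‖ ^ 2
        = ‖x‖ ^ 2 - 2 * ((3:ℝ) * inner ℝ x x0) + (3:ℝ)^2 * ‖x0‖ ^ 2 := by
      rw [show (3:ℝ) • x0 - x = -(x - (3:ℝ) • x0) by module, norm_neg,
        @norm_sub_sq_real (EuclideanSpace ℝ (Fin N)) _ _ x ((3:ℝ) • x0),
        real_inner_smul_right, norm_smul]
      norm_num
      ring
    have h1' : ‖x - x0‖ ^ 2 < 1 := by nlinarith [norm_nonneg (x - x0)]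
    have h2' : (1:ℝ) ≤ ‖x - (2:ℝ) • x0‖ ^ 2 := by nlinarith [norm_nonneg (x - (2:ℝ) • x0)]
    have hsq : ‖x‖ ^ 2 ≤ ‖(3:ℝ) • x0 - x‖ ^ 2 := by nlinarith
    nlinarith [norm_nonneg x, norm_nonneg ((3:ℝ) • x0 - x)]
  have hS1m : MeasurableSet S1 := measurableSet_ball.diff measurableSet_ball
  have hint : ∀ (y : EuclideanSpace ℝ (Fin N)),
      IntegrableOn (fun x => ‖x‖ ^ a) (Metric.ball y 1) := fun y =>
    (hcont.continuousOn.integrableOn_compact (isCompact_closedBall y 1)).mono_set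
      Metric.ball_subset_closedBall
  have hintS1 : IntegrableOn (fun x => ‖x‖ ^ a) S1 :=
    (hint x0).mono_set Set.diff_subset
  have hintS2 : IntegrableOn (fun x => ‖x‖ ^ a) S2 :=
    (hint ((2:ℝ) • x0)).mono_set Set.diff_subset
  have hintT : IntegrableOn (fun x => ‖(3:ℝ) • x0 - x‖ ^ a)
      ((fun x : EuclideanSpace ℝ (Fin N) => (3:ℝ) • x0 - x) ⁻¹' S2) :=
    (hmp.integrableOn_comp_preimage hemb).mpr hintS2
  calc
    ∫ x in S1, ‖x‖ ^ a ≤ ∫ x in S1, ‖(3:ℝ) • x0 - x‖ ^ a :=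
      setIntegral_mono_on hintS1 (hintT.mono_set hsub) hS1m hpt
    _ ≤ ∫ x in (fun x : EuclideanSpace ℝ (Fin N) => (3:ℝ) • x0 - x) ⁻¹' S2,
        ‖(3:ℝ) • x0 - x‖ ^ a := by
      refine setIntegral_mono_set hintT ?_ (HasSubset.Subset.eventuallyLE hsub)
      filter_upwards with x using Real.rpow_nonneg (norm_nonneg _) a
    _ = ∫ x in S2, ‖x‖ ^ a := hmp.setIntegral_preimage_emb hemb (fun y => ‖y‖ ^ a) S2
end

section
/- Let N ≥ 1 and a ≥ 0. The weight w_a(x) = ‖x‖^a on ℝ^N is doubling with doubling constant 2^{N+a}: for every x0 ∈ ℝ^N and every R > 0, ∫_{B_{2R}(x0)} ‖x‖^a dx ≤ 2^{N+a} ∫_{B_R(x0)} ‖x‖^a dx. -/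
open MeasureTheory Metric Set
open scoped RealInnerProductSpace

variable {N : ℕ}

local notation "E" => EuclideanSpace ℝ (Fin N)

/-- The reflection map across the hyperplane orthogonal to `c` through `(3/4)•c`. -/
noncomputable def sig (c : E) : E → E :=
  fun x => x + ((3/2 : ℝ) - 2 * ⟪x, c⟫ / ‖c‖ ^ 2) • c

lemma normsq_add_smul (c x : E) (t : ℝ) :
    ‖x + t • c‖ ^ 2 = ‖x‖ ^ 2 + 2 * t * ⟪x, c⟫ + t ^ 2 * ‖c‖ ^ 2 := by
  rw [norm_add_sq_real, real_inner_smul_right, norm_smul]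
  simp [mul_pow, sq_abs]
  ring

lemma sig_measurePreserving {c : E} (hc : c ≠ 0) :
    MeasurePreserving (sig c) volume volume := by
  have hL : sig c = (fun y => y + (3/2 : ℝ) • c) ∘
      ((Submodule.reflection (ℝ ∙ c)).trans (LinearIsometryEquiv.neg ℝ)) := by
    funext x
    have hproj : ((ℝ ∙ c).starProjection x : E) = (⟪c, x⟫ / ‖c‖ ^ 2) • c :=
      Submodule.starProjection_singleton ℝ x
    simp only [Function.comp_apply, LinearIsometryEquiv.trans_apply,
      LinearIsometryEquiv.coe_neg, Submodule.reflection_apply, hproj, sig]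
    rw [real_inner_comm c x, two_smul]
    module
  rw [hL]
  exact (measurePreserving_add_right volume _).comp
    ((Submodule.reflection (ℝ ∙ c)).trans (LinearIsometryEquiv.neg ℝ)).measurePreserving

lemma sig_norm₁ {c : E} (hc : c ≠ 0) (x : E) :
    ‖sig c x - (2:ℝ)⁻¹ • c‖ ^ 2 = ‖x - c‖ ^ 2 := by
  have hu : ‖c‖ ^ 2 ≠ 0 := pow_ne_zero _ (norm_ne_zero_iff.2 hc)
  have e1 : sig c x - (2:ℝ)⁻¹ • c = x + ((1:ℝ) - 2 * ⟪x, c⟫ / ‖c‖ ^ 2) • c := by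
    simp only [sig]; module
  have e2 : x - c = x + (-1 : ℝ) • c := by module
  rw [e1, e2, normsq_add_smul, normsq_add_smul]
  field_simp
  ring

lemma sig_norm₂ {c : E} (hc : c ≠ 0) (x : E) :
    ‖sig c x - c‖ ^ 2 = ‖x - (2:ℝ)⁻¹ • c‖ ^ 2 := by
  have hu : ‖c‖ ^ 2 ≠ 0 := pow_ne_zero _ (norm_ne_zero_iff.2 hc)
  have e1 : sig c x - c = x + ((1/2:ℝ) - 2 * ⟪x, c⟫ / ‖c‖ ^ 2) • c := by
    simp only [sig]; module
  have e2 : x - (2:ℝ)⁻¹ • c = x + (-(2⁻¹) : ℝ) • c := by module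
  rw [e1, e2, normsq_add_smul, normsq_add_smul]
  field_simp
  ring

lemma sig_norm₃ {c : E} (hc : c ≠ 0) (x : E) :
    ‖sig c x‖ ^ 2 = ‖x‖ ^ 2 - 3 * (⟪x, c⟫ - (3/4) * ‖c‖ ^ 2) := by
  have hu : ‖c‖ ^ 2 ≠ 0 := pow_ne_zero _ (norm_ne_zero_iff.2 hc)
  have e1 : sig c x = x + ((3/2:ℝ) - 2 * ⟪x, c⟫ / ‖c‖ ^ 2) • c := rfl
  rw [e1, normsq_add_smul]
  field_simp
  ring

lemma sig_norm₄ (c x : E) :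
    ‖x - (2:ℝ)⁻¹ • c‖ ^ 2 - ‖x - c‖ ^ 2 = ⟪x, c⟫ - (3/4) * ‖c‖ ^ 2 := by
  have e1 : x - (2:ℝ)⁻¹ • c = x + (-(2⁻¹) : ℝ) • c := by module
  have e2 : x - c = x + (-1 : ℝ) • c := by module
  rw [e1, e2, normsq_add_smul, normsq_add_smul]
  ring

lemma key_vol (c : E) (R r : ℝ) :
    volume (ball c R ∩ closedBall (0:E) r) ≤
      volume (ball ((2:ℝ)⁻¹ • c) R ∩ closedBall (0:E) r) := by
  rcases eq_or_ne c 0 with rfl | hc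
  · simp
  set S := ball c R ∩ closedBall (0:E) r with hS
  set T := ball ((2:ℝ)⁻¹ • c) R ∩ closedBall (0:E) r with hT
  have hSm : MeasurableSet S := measurableSet_ball.inter measurableSet_closedBall
  have hTm : MeasurableSet T := measurableSet_ball.inter measurableSet_closedBall
  have hSsub : S \ T ⊆ (sig c) ⁻¹' (T \ S) := by
    rintro x ⟨⟨hx1, hx2⟩, hxT⟩
    have hx2' : ‖x‖ ≤ r := by simpa [mem_closedBall, dist_zero_right] using hx2
    have hx1' : ‖x - c‖ < R := by simpa [mem_ball, dist_eq_norm] using hx1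
    have hxb : x ∉ ball ((2:ℝ)⁻¹ • c) R := fun h => hxT ⟨h, hx2⟩
    have hx3 : R ≤ ‖x - (2:ℝ)⁻¹ • c‖ := by
      simpa [mem_ball, dist_eq_norm, not_lt] using hxb
    have hpos : 0 ≤ ⟪x, c⟫ - (3/4) * ‖c‖ ^ 2 := by
      have h4 := sig_norm₄ c x
      nlinarith [norm_nonneg (x - c), norm_nonneg (x - (2:ℝ)⁻¹ • c)]
    refine ⟨⟨?_, ?_⟩, ?_⟩
    · rw [mem_ball, dist_eq_norm]
      nlinarith [sig_norm₁ hc x, norm_nonneg (sig c x - (2:ℝ)⁻¹ • c),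
        norm_nonneg (x - c)]
    · rw [mem_closedBall, dist_zero_right]
      nlinarith [sig_norm₃ hc x, norm_nonneg (sig c x), norm_nonneg x]
    · rintro ⟨hb, -⟩
      rw [mem_ball, dist_eq_norm] at hb
      nlinarith [sig_norm₂ hc x, norm_nonneg (x - (2:ℝ)⁻¹ • c),
        norm_nonneg (sig c x - c)]
  have himg : volume (S \ T) ≤ volume (T \ S) := by
    calc volume (S \ T) ≤ volume ((sig c) ⁻¹' (T \ S)) := measure_mono hSsub
      _ = volume (T \ S) := (sig_measurePreserving hc).measure_preimage ((hTm.diff hSm).nullMeasurableSet)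
  calc volume S = volume (S ∩ T) + volume (S \ T) := (measure_inter_add_diff S hTm).symm
    _ ≤ volume (S ∩ T) + volume (T \ S) := add_le_add_right himg _
    _ = volume (T ∩ S) + volume (T \ S) := by rw [Set.inter_comm]
    _ = volume T := measure_inter_add_diff T hSm

lemma w_measurable (a : ℝ) : Measurable fun x : E => ‖x‖ ^ a :=
  measurable_norm.pow_const a |>.comp measurable_id |>.mono le_rfl le_rfl

lemma step2L {a : ℝ} (ha : 0 < a) (c : E) (R : ℝ) :
    (∫⁻ x in ball ((2:ℝ)⁻¹ • c) R, ENNReal.ofReal (‖x‖ ^ a)) ≤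
      ∫⁻ x in ball c R, ENNReal.ofReal (‖x‖ ^ a) := by
  have hmble : Measurable fun x : E => ‖x‖ ^ a := w_measurable a
  have hnn : ∀ (m : Measure E), 0 ≤ᵐ[m] fun x : E => ‖x‖ ^ a :=
    fun m => Filter.Eventually.of_forall fun x => Real.rpow_nonneg (norm_nonneg x) a
  rw [lintegral_eq_lintegral_meas_lt _ (hnn _) hmble.aemeasurable,
    lintegral_eq_lintegral_meas_lt _ (hnn _) hmble.aemeasurable]
  refine lintegral_mono_ae ?_
  filter_upwards [ae_restrict_mem measurableSet_Ioi] with t ht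
  have hset : {x : E | t < ‖x‖ ^ a} = (closedBall (0:E) (t ^ a⁻¹))ᶜ := by
    ext x
    simp only [Set.mem_setOf_eq, Set.mem_compl_iff, mem_closedBall, dist_zero_right, not_le]
    exact (Real.rpow_inv_lt_iff_of_pos (le_of_lt ht) (norm_nonneg x) ha).symm
  rw [hset, Measure.restrict_apply (measurableSet_closedBall.compl),
    Measure.restrict_apply (measurableSet_closedBall.compl)]
  set r := t ^ a⁻¹
  set K := closedBall (0:E) r
  have h1 := measure_inter_add_diff (μ := volume) (ball ((2:ℝ)⁻¹ • c) R) (measurableSet_closedBall (x := (0:E)) (ε := r))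
  have h2 := measure_inter_add_diff (μ := volume) (ball c R) (measurableSet_closedBall (x := (0:E)) (ε := r))
  have hb : volume (ball ((2:ℝ)⁻¹ • c) R) = volume (ball c R) := by
    rw [Measure.addHaar_ball_center volume ((2:ℝ)⁻¹ • c), Measure.addHaar_ball_center volume c]
  have hK := key_vol c R r
  have hfin : volume (ball c R ∩ K) ≠ ⊤ :=
    (lt_of_le_of_lt (measure_mono Set.inter_subset_left) measure_ball_lt_top).ne
  have hfin2 : volume (ball ((2:ℝ)⁻¹ • c) R ∩ K) ≠ ⊤ :=
    (lt_of_le_of_lt (measure_mono Set.inter_subset_left) measure_ball_lt_top).ne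
  have hdiff : Kᶜ ∩ ball ((2:ℝ)⁻¹ • c) R = ball ((2:ℝ)⁻¹ • c) R \ K := by
    rw [Set.inter_comm, Set.diff_eq]
  have hdiff2 : Kᶜ ∩ ball c R = ball c R \ K := by
    rw [Set.inter_comm, Set.diff_eq]
  rw [hdiff, hdiff2]
  have : volume (ball c R ∩ K) + volume (ball ((2:ℝ)⁻¹ • c) R \ K) ≤
      volume (ball c R ∩ K) + volume (ball c R \ K) := by
    rw [h2]
    calc volume (ball c R ∩ K) + volume (ball ((2:ℝ)⁻¹ • c) R \ K)
        ≤ volume (ball ((2:ℝ)⁻¹ • c) R ∩ K) + volume (ball ((2:ℝ)⁻¹ • c) R \ K) :=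
          add_le_add_left hK _
      _ = volume (ball ((2:ℝ)⁻¹ • c) R) := h1
      _ = volume (ball c R) := hb
  exact (ENNReal.add_le_add_iff_left hfin).mp this

lemma integral_ball_eq_toReal {a : ℝ} (ha : 0 ≤ a) (m : E) (R : ℝ) :
    (∫ x in ball m R, ‖x‖ ^ a) =
      (∫⁻ x in ball m R, ENNReal.ofReal (‖x‖ ^ a)).toReal := by
  rw [integral_eq_lintegral_of_nonneg_ae
    (Filter.Eventually.of_forall fun x => Real.rpow_nonneg (norm_nonneg x) a)
    (w_measurable a).aestronglyMeasurable]

lemma lint_ball_lt_top {a : ℝ} (ha : 0 ≤ a) (m : E) (R : ℝ) :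
    (∫⁻ x in ball m R, ENNReal.ofReal (‖x‖ ^ a)) < ⊤ := by
  have hbound : ∀ x ∈ ball m R, ENNReal.ofReal (‖x‖ ^ a) ≤
      ENNReal.ofReal ((‖m‖ + |R|) ^ a) := by
    intro x hx
    apply ENNReal.ofReal_le_ofReal
    apply Real.rpow_le_rpow (norm_nonneg x) _ ha
    have h1 : ‖x - m‖ < R := by simpa [mem_ball, dist_eq_norm] using hx
    calc ‖x‖ = ‖m + (x - m)‖ := by rw [show m + (x - m) = x by module]
      _ ≤ ‖m‖ + ‖x - m‖ := norm_add_le _ _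
      _ ≤ ‖m‖ + |R| := by
          have := le_abs_self R
          linarith
  calc (∫⁻ x in ball m R, ENNReal.ofReal (‖x‖ ^ a))
      ≤ ∫⁻ _ in ball m R, ENNReal.ofReal ((‖m‖ + |R|) ^ a) := by
        refine lintegral_mono_ae ?_
        filter_upwards [ae_restrict_mem measurableSet_ball] with x hx
        exact hbound x hx
    _ = ENNReal.ofReal ((‖m‖ + |R|) ^ a) * volume (ball m R) := by
        rw [setLIntegral_const]
    _ < ⊤ := ENNReal.mul_lt_top ENNReal.ofReal_lt_top measure_ball_lt_top

lemma step2 {a : ℝ} (ha : 0 ≤ a) (c : E) (R : ℝ) :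
    (∫ x in ball ((2:ℝ)⁻¹ • c) R, ‖x‖ ^ a) ≤ ∫ x in ball c R, ‖x‖ ^ a := by
  rcases ha.eq_or_lt with rfl | ha'
  · simp only [Real.rpow_zero]
    rw [setIntegral_const, setIntegral_const]
    rw [measureReal_def, measureReal_def, Measure.addHaar_ball_center volume ((2:ℝ)⁻¹ • c),
      Measure.addHaar_ball_center volume c]
  · rw [integral_ball_eq_toReal ha, integral_ball_eq_toReal ha]
    exact ENNReal.toReal_mono (lint_ball_lt_top ha c R).ne (step2L ha' c R)

/-- The power weight `‖x‖^a` on `ℝ^N` is doubling with doubling constant `2^(N+a)`. -/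
theorem stmt_6 (N : ℕ) (hN : 1 ≤ N) (a : ℝ) (ha : 0 ≤ a)
    (x0 : EuclideanSpace ℝ (Fin N)) (R : ℝ) (hR : 0 < R) :
    (∫ x in Metric.ball x0 (2 * R), ‖x‖ ^ a) ≤
      2 ^ ((N : ℝ) + a) * ∫ x in Metric.ball x0 R, ‖x‖ ^ a := by
  set f := (ball x0 (2*R)).indicator (fun x : EuclideanSpace ℝ (Fin N) => ‖x‖ ^ a) with hf
  have h2 : (0:ℝ) ≤ 2 := by norm_num
  have hf2 : ∀ y : EuclideanSpace ℝ (Fin N), f ((2:ℝ) • y) =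
      (2:ℝ) ^ a * (ball ((2:ℝ)⁻¹ • x0) R).indicator
        (fun x : EuclideanSpace ℝ (Fin N) => ‖x‖ ^ a) y := by
    intro y
    have hmem : (2:ℝ) • y ∈ ball x0 (2*R) ↔ y ∈ ball ((2:ℝ)⁻¹ • x0) R := by
      simp only [mem_ball, dist_eq_norm]
      rw [show (2:ℝ) • y - x0 = (2:ℝ) • (y - (2:ℝ)⁻¹ • x0) by module, norm_smul]
      rw [Real.norm_ofNat]
      exact mul_lt_mul_iff_right₀ (by norm_num)
    simp only [hf]
    by_cases hy : y ∈ ball ((2:ℝ)⁻¹ • x0) R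
    · rw [Set.indicator_of_mem (hmem.2 hy), Set.indicator_of_mem hy]
      rw [norm_smul, Real.norm_ofNat, Real.mul_rpow h2 (norm_nonneg y)]
    · rw [Set.indicator_of_notMem (fun h => hy (hmem.1 h)), Set.indicator_of_notMem hy,
        mul_zero]
  have hcs := Measure.integral_comp_smul (volume : Measure (EuclideanSpace ℝ (Fin N))) f 2
  simp only [hf2, finrank_euclideanSpace_fin, smul_eq_mul] at hcs
  rw [integral_const_mul] at hcs
  rw [hf, integral_indicator measurableSet_ball, integral_indicator measurableSet_ball] at hcs
  have habs : |((2:ℝ)^N)⁻¹| = ((2:ℝ)^N)⁻¹ := abs_of_pos (by positivity)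
  rw [habs] at hcs
  have hscale : (∫ x in ball x0 (2*R), ‖x‖ ^ a) =
      (2:ℝ)^N * ((2:ℝ) ^ a * ∫ y in ball ((2:ℝ)⁻¹ • x0) R, ‖y‖ ^ a) := by
    rw [hcs]
    have h2N : ((2:ℝ)^N) ≠ 0 := by positivity
    field_simp
  have hstep2 := step2 ha x0 R
  have hpow : (2:ℝ) ^ ((N : ℝ) + a) = (2:ℝ)^N * (2:ℝ)^a := by
    rw [Real.rpow_add (by norm_num : (0:ℝ) < 2), Real.rpow_natCast]
  rw [hscale, hpow, mul_assoc]
  have h1 : (0:ℝ) ≤ (2:ℝ)^a := Real.rpow_nonneg h2 a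
  have h0 : (0:ℝ) ≤ (2:ℝ)^N := by positivity
  exact mul_le_mul_of_nonneg_left (mul_le_mul_of_nonneg_left hstep2 h1) h0
end

section
/- Let N ≥ 1 and A = (a_1, …, a_N) with a_i ≥ 0 for all i. For x0 ∈ ℝ^N and R > 0 let Q_R(x0) = ∏_{i=1}^N (x0_i - R, x0_i + R) be the open cube of half-side R centered at x0. Then ∫_{Q_{2R}(x0)} ∏_{i=1}^N |x_i|^{a_i} dx ≤ 2^{N_A} ∫_{Q_R(x0)} ∏_{i=1}^N |x_i|^{a_i} dx, where N_A = N + a_1 + ⋯ + a_N; that is, the monomial weight x^A is doubling on cubes with doubling constant 2^{N_A}. -/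
open MeasureTheory

private lemma cont_w {a : ℝ} (ha : 0 ≤ a) : Continuous fun t : ℝ => |t| ^ a :=
  (Real.continuous_rpow_const ha).comp continuous_abs

private lemma oneD_core {a : ℝ} (ha : 0 ≤ a) (c R : ℝ) (hR : 0 < R) (hc : 0 ≤ c) :
    (∫ t in (c - 2 * R)..(c + 2 * R), |t| ^ a) ≤
      2 ^ ((1 : ℝ) + a) * ∫ t in (c - R)..(c + R), |t| ^ a := by
  have hcont := cont_w ha
  have hint : ∀ l r : ℝ, IntervalIntegrable (fun t => |t| ^ a) volume l r :=
    fun l r => hcont.intervalIntegrable l r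
  -- scaling: 2^(1+a) * ∫_{c-R}^{c+R} = ∫_{2c-2R}^{2c+2R}
  have hscale : 2 ^ ((1 : ℝ) + a) * (∫ t in (c - R)..(c + R), |t| ^ a)
      = ∫ t in (2 * c - 2 * R)..(2 * c + 2 * R), |t| ^ a := by
    have h := intervalIntegral.smul_integral_comp_mul_left (a := c - R) (b := c + R)
      (fun t : ℝ => |t| ^ a) 2
    have heq : (∫ x in (c - R)..(c + R), |2 * x| ^ a)
        = ∫ x in (c - R)..(c + R), 2 ^ a * |x| ^ a := by
      apply intervalIntegral.integral_congr
      intro x _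
      show |2 * x| ^ a = 2 ^ a * |x| ^ a
      rw [abs_mul, abs_two, Real.mul_rpow (by norm_num) (abs_nonneg x)]
    rw [heq] at h
    rw [intervalIntegral.integral_const_mul] at h
    have h2 : (2 : ℝ) * (c - R) = 2 * c - 2 * R := by ring
    have h3 : (2 : ℝ) * (c + R) = 2 * c + 2 * R := by ring
    rw [h2, h3] at h
    rw [← h, smul_eq_mul, Real.rpow_add (by norm_num : (0:ℝ) < 2), Real.rpow_one]
    ring
  rw [hscale]
  -- translation comparison
  have hcomp : (∫ t in (c - 2 * R)..(c - 2 * R + c), |t| ^ a)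
      ≤ ∫ t in (c + 2 * R)..(c + 2 * R + c), |t| ^ a := by
    have e1 : (∫ t in (c - 2 * R)..(c - 2 * R + c), |t| ^ a)
        = ∫ x in (0:ℝ)..c, |x + (c - 2 * R)| ^ a := by
      rw [intervalIntegral.integral_comp_add_right (fun t => |t| ^ a) (c - 2 * R)]
      norm_num [add_comm]
    have e2 : (∫ t in (c + 2 * R)..(c + 2 * R + c), |t| ^ a)
        = ∫ x in (0:ℝ)..c, |x + (c + 2 * R)| ^ a := by
      rw [intervalIntegral.integral_comp_add_right (fun t => |t| ^ a) (c + 2 * R)]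
      norm_num [add_comm]
    rw [e1, e2]
    apply intervalIntegral.integral_mono_on hc
    · exact ((cont_w ha).comp (by continuity)).intervalIntegrable 0 c
    · exact ((cont_w ha).comp (by continuity)).intervalIntegrable 0 c
    · intro x hx
      apply Real.rpow_le_rpow (abs_nonneg _) _ ha
      have hx0 : 0 ≤ x := hx.1
      have : |x + (c + 2 * R)| = x + (c + 2 * R) := abs_of_nonneg (by linarith)
      rw [this]
      rw [abs_le]
      constructor <;> linarith
  have s1 : (∫ t in (c - 2 * R)..(2 * c - 2 * R), |t| ^ a)
      + (∫ t in (2 * c - 2 * R)..(2 * c + 2 * R), |t| ^ a)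
      = ∫ t in (c - 2 * R)..(2 * c + 2 * R), |t| ^ a :=
    intervalIntegral.integral_add_adjacent_intervals (hint _ _) (hint _ _)
  have s2 : (∫ t in (c - 2 * R)..(c + 2 * R), |t| ^ a)
      + (∫ t in (c + 2 * R)..(2 * c + 2 * R), |t| ^ a)
      = ∫ t in (c - 2 * R)..(2 * c + 2 * R), |t| ^ a :=
    intervalIntegral.integral_add_adjacent_intervals (hint _ _) (hint _ _)
  have e3 : c - 2 * R + c = 2 * c - 2 * R := by ring
  have e4 : c + 2 * R + c = 2 * c + 2 * R := by ring
  rw [e3, e4] at hcomp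
  linarith

private lemma oneD {a : ℝ} (ha : 0 ≤ a) (c R : ℝ) (hR : 0 < R) :
    (∫ t in Set.Ioo (c - 2 * R) (c + 2 * R), |t| ^ a) ≤
      2 ^ ((1 : ℝ) + a) * ∫ t in Set.Ioo (c - R) (c + R), |t| ^ a := by
  have key : ∀ c' : ℝ, 0 ≤ c' →
      (∫ t in Set.Ioo (c' - 2 * R) (c' + 2 * R), |t| ^ a) ≤
        2 ^ ((1 : ℝ) + a) * ∫ t in Set.Ioo (c' - R) (c' + R), |t| ^ a := by
    intro c' hc'
    have h1 : (∫ t in Set.Ioo (c' - 2 * R) (c' + 2 * R), |t| ^ a)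
        = ∫ t in (c' - 2 * R)..(c' + 2 * R), |t| ^ a := by
      rw [intervalIntegral.integral_of_le (by linarith), integral_Ioc_eq_integral_Ioo]
    have h2 : (∫ t in Set.Ioo (c' - R) (c' + R), |t| ^ a)
        = ∫ t in (c' - R)..(c' + R), |t| ^ a := by
      rw [intervalIntegral.integral_of_le (by linarith), integral_Ioc_eq_integral_Ioo]
    rw [h1, h2]
    exact oneD_core ha c' R hR hc'
  rcases le_total 0 c with hc | hc
  · exact key c hc
  · have hrefl : ∀ r : ℝ, (∫ t in Set.Ioo (c - r) (c + r), |t| ^ a)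
        = ∫ t in Set.Ioo (-c - r) (-c + r), |t| ^ a := by
      intro r
      rcases le_or_gt r 0 with hr | hr
      · rw [Set.Ioo_eq_empty (by intro h; linarith [h.le]),
          Set.Ioo_eq_empty (by intro h; linarith [h.le])]
      · have e1 : (∫ t in Set.Ioo (c - r) (c + r), |t| ^ a)
            = ∫ t in (c - r)..(c + r), |t| ^ a := by
          rw [intervalIntegral.integral_of_le (by linarith), integral_Ioc_eq_integral_Ioo]
        have e2 : (∫ t in Set.Ioo (-c - r) (-c + r), |t| ^ a)
            = ∫ t in (-c - r)..(-c + r), |t| ^ a := by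
          rw [intervalIntegral.integral_of_le (by linarith), integral_Ioc_eq_integral_Ioo]
        rw [e1, e2]
        have h := intervalIntegral.integral_comp_neg (a := -c - r) (b := -c + r)
          (fun t : ℝ => |t| ^ a)
        simp only [abs_neg] at h
        rw [h]
        congr 1 <;> ring
    rw [hrefl (2 * R), hrefl R]
    exact key (-c) (by linarith)

/-- The monomial weight `x^A = ∏ |x_i|^{a_i}` is doubling on cubes with doubling
constant `2^{N_A}`, where `N_A = N + a_1 + ⋯ + a_N`. -/
theorem stmt_9 (N : ℕ) (hN : 1 ≤ N) (a : Fin N → ℝ) (ha : ∀ i, 0 ≤ a i)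
    (x0 : Fin N → ℝ) (R : ℝ) (hR : 0 < R) :
    (∫ x in Set.univ.pi (fun i => Set.Ioo (x0 i - 2 * R) (x0 i + 2 * R)),
        ∏ i, |x i| ^ a i) ≤
      2 ^ ((N : ℝ) + ∑ i, a i) *
        ∫ x in Set.univ.pi (fun i => Set.Ioo (x0 i - R) (x0 i + R)),
          ∏ i, |x i| ^ a i := by
  -- rewrite each side as a product of one-dimensional integrals
  have hrw : ∀ r : ℝ,
      (∫ x in Set.univ.pi (fun i => Set.Ioo (x0 i - r) (x0 i + r)), ∏ i, |x i| ^ a i)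
        = ∏ i, ∫ t in Set.Ioo (x0 i - r) (x0 i + r), |t| ^ a i := by
    intro r
    have hms : MeasurableSet (Set.univ.pi fun i => Set.Ioo (x0 i - r) (x0 i + r)) :=
      MeasurableSet.univ_pi fun i => measurableSet_Ioo
    rw [← integral_indicator hms]
    have hind : ∀ x : Fin N → ℝ,
        (Set.univ.pi fun i => Set.Ioo (x0 i - r) (x0 i + r)).indicator
            (fun x => ∏ i, |x i| ^ a i) x
          = ∏ i, (Set.Ioo (x0 i - r) (x0 i + r)).indicator (fun t => |t| ^ a i) (x i) := by
      intro x
      by_cases hx : x ∈ Set.univ.pi fun i => Set.Ioo (x0 i - r) (x0 i + r)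
      · rw [Set.indicator_of_mem hx]
        refine Finset.prod_congr rfl fun i _ => ?_
        rw [Set.indicator_of_mem (hx i (Set.mem_univ i))]
      · rw [Set.indicator_of_notMem hx]
        rw [Set.mem_univ_pi] at hx
        push_neg at hx
        obtain ⟨i, hi⟩ := hx
        refine (Finset.prod_eq_zero (Finset.mem_univ i) ?_).symm
        rw [Set.indicator_of_notMem hi]
    simp_rw [hind]
    rw [MeasureTheory.integral_fintype_prod_volume_eq_prod
      (fun i t => (Set.Ioo (x0 i - r) (x0 i + r)).indicator (fun s => |s| ^ a i) t)]
    exact Finset.prod_congr rfl fun i _ => integral_indicator measurableSet_Ioo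
  rw [hrw (2 * R), hrw R]
  have hconst : (2 : ℝ) ^ ((N : ℝ) + ∑ i, a i) = ∏ i, (2 : ℝ) ^ ((1 : ℝ) + a i) := by
    rw [← Real.rpow_sum_of_pos (by norm_num : (0:ℝ) < 2)]
    congr 1
    rw [Finset.sum_add_distrib]
    simp
  rw [hconst, ← Finset.prod_mul_distrib]
  apply Finset.prod_le_prod
  · intro i _
    exact setIntegral_nonneg measurableSet_Ioo fun t _ => Real.rpow_nonneg (abs_nonneg t) _
  · intro i _
    exact oneD (ha i) (x0 i) R hR
end

section
/- Let N ≥ 1, p > 1, s > 0, and let A = (a_1, …, a_N) with a_i ≥ 0 for all i; set u(y) = ‖y‖^{-s}, x^A = ∏_{i=1}^N |x_i|^{a_i} and N_A = N + a_1 + ⋯ + a_N. Then at every point x ∈ ℝ^N all of whose coordinates are nonzero, the vector field V(y) = y^A ‖∇u(y)‖^{p-2} ∇u(y) is differentiable and -div V(x) = s^{p-1} (N_A - (p-1)s - p) · x^A · ‖x‖^{-(p-1)s-p}. In particular, for 1 < s < (N_A - p)/(p-1) one has -div(x^A ‖∇(‖x‖^{-s})‖^{p-2} ∇(‖x‖^{-s}))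 = C₂ x^A ‖x‖^{-s-2-(p-2)(s+1)} with C₂ = s^{p-1}(N_A - (p-2)(s+1) - 2 - s) > 0. -/
open Real Filter

lemma aux_norm_rpow {E : Type*} [NormedAddCommGroup E] [InnerProductSpace ℝ E]
    (x : E) (hx : x ≠ 0) (r : ℝ) :
    HasFDerivAt (fun y : E => ‖y‖ ^ r) ((r * ‖x‖ ^ (r - 2)) • (innerSL ℝ x)) x := by
  have h2 : HasFDerivAt (fun y : E => ‖y‖ ^ (2 : ℝ))
      (((2:ℝ) * ‖x‖ ^ ((2:ℝ) - 2)) • innerSL ℝ x) x := hasFDerivAt_norm_rpow x one_lt_two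
  have hb : (0:ℝ) < ‖x‖ ^ (2:ℝ) := Real.rpow_pos_of_pos (norm_pos_iff.2 hx) _
  have houter : HasDerivAt (fun t : ℝ => t ^ (r / 2))
      ((r / 2) * (‖x‖ ^ (2:ℝ)) ^ (r / 2 - 1)) (‖x‖ ^ (2:ℝ)) :=
    Real.hasDerivAt_rpow_const (Or.inl hb.ne')
  have hc := houter.comp_hasFDerivAt x h2
  have hfun : (fun y : E => (‖y‖ ^ (2:ℝ)) ^ (r / 2)) = fun y : E => ‖y‖ ^ r := by
    funext y
    rw [← Real.rpow_mul (norm_nonneg y), show (2:ℝ) * (r / 2) = r by ring]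
  rw [Function.comp_def, hfun] at hc
  refine hc.congr_fderiv ?_
  rw [smul_smul, ← Real.rpow_mul (norm_nonneg x), show (2:ℝ) * (r / 2 - 1) = r - 2 by ring]
  norm_num
  ring_nf

lemma aux_abs_rpow (a : ℝ) {t : ℝ} (ht : t ≠ 0) :
    HasDerivAt (fun u : ℝ => |u| ^ a) (a * |t| ^ a / t) t := by
  have h1 : HasDerivAt (fun u : ℝ => |u|) ((SignType.sign t : ℝ)) t := hasDerivAt_abs ht
  have h2 : HasDerivAt (fun v : ℝ => v ^ a) (a * |t| ^ (a - 1)) |t| :=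
    Real.hasDerivAt_rpow_const (Or.inl (abs_ne_zero.2 ht))
  have hc := h2.comp t h1
  refine hc.congr_deriv ?_
  rw [Real.rpow_sub (abs_pos.2 ht), Real.rpow_one]
  rcases ht.lt_or_gt with h | h
  · simp [abs_of_neg h, sign_neg h]
    ring
  · simp [abs_of_pos h, sign_pos h]
    ring

lemma aux_grad {E : Type*} [NormedAddCommGroup E] [InnerProductSpace ℝ E]
    [CompleteSpace E] {y : E} (hy : y ≠ 0) (s : ℝ) :
    HasGradientAt (fun y : E => ‖y‖ ^ (-s)) ((-s * ‖y‖ ^ (-s - 2)) • y) y := by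
  rw [hasGradientAt_iff_hasFDerivAt]
  have h := aux_norm_rpow y hy (-s)
  refine h.congr_fderiv ?_
  ext z
  simp [InnerProductSpace.toDual_apply_apply, real_inner_smul_left]

lemma aux_scalar (s p wy ny : ℝ) (hs : 0 < s) (hny : 0 < ny) :
    wy * (s * ny ^ (-s - 1)) ^ (p - 2) * (-s * ny ^ (-s - 2)) =
      (-(s ^ (p - 1))) * (wy * ny ^ (-(p - 1) * s - p)) := by
  rw [Real.mul_rpow hs.le (Real.rpow_nonneg hny.le _),
    ← Real.rpow_mul hny.le]
  have h1 : s ^ (p - 1) = s ^ (p - 2) * s := by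
    rw [show (p - 1 : ℝ) = (p - 2) + 1 by ring, Real.rpow_add_one hs.ne']
  have h2 : ny ^ ((-s - 1) * (p - 2)) * ny ^ (-s - 2) = ny ^ (-(p - 1) * s - p) := by
    rw [← Real.rpow_add hny, show (-s - 1) * (p - 2) + (-s - 2) = -(p - 1) * s - p by ring]
  calc wy * (s ^ (p - 2) * ny ^ ((-s - 1) * (p - 2))) * (-s * ny ^ (-s - 2))
      = (-(s ^ (p - 2) * s)) * (wy * (ny ^ ((-s - 1) * (p - 2)) * ny ^ (-s - 2))) := by ring
    _ = (-(s ^ (p - 1))) * (wy * ny ^ (-(p - 1) * s - p)) := by rw [h1, h2]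

/-- For `u(y) = ‖y‖^{-s}` and the monomial weight `x^A = ∏ |x_i|^{a_i}`, the field
`V(y) = y^A ‖∇u(y)‖^{p-2} ∇u(y)` is differentiable at every `x` with all coordinates
nonzero and `-div V(x) = s^{p-1}(N_A - (p-1)s - p) x^A ‖x‖^{-(p-1)s-p}`, the constant
being positive when `1 < s < (N_A - p)/(p-1)`. -/
theorem stmt_15 (N : ℕ) (hN : 1 ≤ N) (p s : ℝ) (hp : 1 < p) (hs : 0 < s)
    (A : Fin N → ℝ) (hA : ∀ i, 0 ≤ A i)
    (u : EuclideanSpace ℝ (Fin N) → ℝ) (hu : ∀ y, u y = ‖y‖ ^ (-s))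
    (V : EuclideanSpace ℝ (Fin N) → EuclideanSpace ℝ (Fin N))
    (hVdef : ∀ y, V y =
      ((∏ i, |y i| ^ A i) * ‖gradient u y‖ ^ (p - 2)) • gradient u y)
    (x : EuclideanSpace ℝ (Fin N)) (hx : ∀ i, x i ≠ 0) :
    (DifferentiableAt ℝ V x ∧
      -(∑ i, fderiv ℝ V x (EuclideanSpace.single i (1 : ℝ)) i) =
        s ^ (p - 1) * (((N : ℝ) + ∑ i, A i) - (p - 1) * s - p) *
          (∏ i, |x i| ^ A i) * ‖x‖ ^ (-(p - 1) * s - p)) ∧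
    (1 < s → s < (((N : ℝ) + ∑ i, A i) - p) / (p - 1) →
      0 < s ^ (p - 1) * (((N : ℝ) + ∑ i, A i) - (p - 2) * (s + 1) - 2 - s)) := by
  classical
  have hx0 : x ≠ 0 := fun h => hx ⟨0, hN⟩ (by simp [h])
  have hpos : (1 < s → s < (((N : ℝ) + ∑ i, A i) - p) / (p - 1) →
      0 < s ^ (p - 1) * (((N : ℝ) + ∑ i, A i) - (p - 2) * (s + 1) - 2 - s)) := by
    intro _ h2
    have hp1 : (0:ℝ) < p - 1 := by linarith
    rw [lt_div_iff₀ hp1] at h2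
    have hsp : (0:ℝ) < s ^ (p - 1) := Real.rpow_pos_of_pos hs _
    nlinarith [hsp]
  -- derivative of the weight
  have hwd : HasFDerivAt (fun y : EuclideanSpace ℝ (Fin N) => ∏ i, |y i| ^ A i)
      (∑ i, (∏ j ∈ Finset.univ.erase i, |x j| ^ A j) •
        ((A i * |x i| ^ A i / x i) • (EuclideanSpace.proj (𝕜 := ℝ) i))) x := by
    have key : ∀ i : Fin N, HasFDerivAt (fun y : EuclideanSpace ℝ (Fin N) => |y i| ^ A i)
        ((A i * |x i| ^ A i / x i) • (EuclideanSpace.proj (𝕜 := ℝ) i)) x := fun i =>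
      (aux_abs_rpow (A i) (hx i)).comp_hasFDerivAt (f := fun y : EuclideanSpace ℝ (Fin N) => y i) x
        (EuclideanSpace.proj (𝕜 := ℝ) i).hasFDerivAt
    have h := HasFDerivAt.finset_prod (u := Finset.univ)
        (g := fun i (y : EuclideanSpace ℝ (Fin N)) => |y i| ^ A i)
        (g' := fun i => (A i * |x i| ^ A i / x i) • (EuclideanSpace.proj (𝕜 := ℝ) i))
        (fun i _ => key i)
    simpa using h
  have hnq : HasFDerivAt (fun y : EuclideanSpace ℝ (Fin N) => ‖y‖ ^ (-(p-1)*s - p))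
      (((-(p-1)*s - p) * ‖x‖ ^ ((-(p-1)*s - p) - 2)) • innerSL ℝ x) x :=
    aux_norm_rpow x hx0 _
  have hWd := ((hwd.mul hnq).const_mul (-(s ^ (p - 1)))).smul (hasFDerivAt_id x)
  have hUev : ∀ᶠ y in nhds x, ∀ i, y i ≠ 0 :=
    eventually_all.2 fun i =>
      ((EuclideanSpace.proj (𝕜 := ℝ) i).continuous.continuousAt).eventually_ne (hx i)
  have hVW : V =ᶠ[nhds x] fun y : EuclideanSpace ℝ (Fin N) =>
      ((-(s ^ (p - 1))) * ((∏ i, |y i| ^ A i) * ‖y‖ ^ (-(p-1)*s - p))) • y := by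
    filter_upwards [hUev] with y hy
    have hyne : y ≠ 0 := fun h => hy ⟨0, hN⟩ (by simp [h])
    have hny : (0:ℝ) < ‖y‖ := norm_pos_iff.2 hyne
    have hgrad : gradient u y = (-s * ‖y‖ ^ (-s - 2)) • y := by
      have hufun : u = fun z : EuclideanSpace ℝ (Fin N) => ‖z‖ ^ (-s) := funext hu
      rw [hufun]
      exact (aux_grad hyne s).gradient
    have hxx : s * ‖y‖ ^ (-s - 2) * ‖y‖ = s * ‖y‖ ^ (-s - 1) := by
      rw [mul_assoc, ← Real.rpow_add_one hny.ne' (-s - 2),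
        show (-s - 2 + 1 : ℝ) = -s - 1 by ring]
    rw [hVdef y, hgrad, norm_smul, Real.norm_eq_abs, abs_mul, abs_neg, abs_of_pos hs,
      abs_of_nonneg (Real.rpow_nonneg (norm_nonneg y) _), smul_smul, hxx]
    congr 1
    exact aux_scalar s p _ ‖y‖ hs hny
  have hdiff : DifferentiableAt ℝ V x := hWd.differentiableAt.congr_of_eventuallyEq hVW
  refine ⟨⟨hdiff, ?_⟩, hpos⟩
  rw [show fderiv ℝ V x = _ from hVW.fderiv_eq.trans hWd.fderiv]
  simp only [ContinuousLinearMap.add_apply, ContinuousLinearMap.smul_apply,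
    ContinuousLinearMap.coe_id', id_eq, ContinuousLinearMap.smulRight_apply,
    ContinuousLinearMap.sum_apply, innerSL_apply_apply, Pi.mul_apply, PiLp.add_apply, PiLp.smul_apply,
    smul_eq_mul, PiLp.proj_apply, EuclideanSpace.single_apply,
    EuclideanSpace.inner_single_right, RCLike.inner_apply, conj_trivial]
  set SA := ∑ i, A i
  simp only [if_true, mul_one, one_mul, mul_ite, mul_zero, Finset.sum_ite_eq',
    Finset.mem_univ, if_pos]
  have hprod : ∀ i : Fin N, (∏ j ∈ Finset.univ.erase i, |x j| ^ A j) * |x i| ^ A i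
      = ∏ j, |x j| ^ A j := fun i => Finset.prod_erase_mul _ _ (Finset.mem_univ i)
  have hterm : ∀ i ∈ (Finset.univ : Finset (Fin N)),
      (-s ^ (p - 1) * ((∏ j, |x j| ^ A j) * ‖x‖ ^ (-(p - 1) * s - p)) +
        -s ^ (p - 1) *
            ((∏ j, |x j| ^ A j) * ((-(p - 1) * s - p) * ‖x‖ ^ (-(p - 1) * s - p - 2) * x i) +
              ‖x‖ ^ (-(p - 1) * s - p) *
                ((∏ j ∈ Finset.univ.erase i, |x j| ^ A j) * (A i * |x i| ^ A i / x i))) *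
          x i)
      = -s ^ (p - 1) * ((∏ j, |x j| ^ A j) * ‖x‖ ^ (-(p - 1) * s - p)) +
        ((-s ^ (p - 1) * ((∏ j, |x j| ^ A j) * ((-(p - 1) * s - p) *
            ‖x‖ ^ (-(p - 1) * s - p - 2)))) * x i ^ 2 +
          (-s ^ (p - 1) * ‖x‖ ^ (-(p - 1) * s - p) * (∏ j, |x j| ^ A j)) * A i) := by
    intro i _
    have h1 : (∏ j ∈ Finset.univ.erase i, |x j| ^ A j) * (A i * |x i| ^ A i / x i) * x i
        = A i * ∏ j, |x j| ^ A j := by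
      rw [mul_assoc, div_mul_cancel₀ _ (hx i), ← hprod i]; ring
    linear_combination (-s ^ (p - 1) * ‖x‖ ^ (-(p - 1) * s - p)) * h1
  rw [Finset.sum_congr rfl hterm, Finset.sum_add_distrib, Finset.sum_add_distrib,
    Finset.sum_const, ← Finset.mul_sum, ← Finset.mul_sum, Finset.card_univ,
    Fintype.card_fin, nsmul_eq_mul]
  have hx2 : ∑ i, x i ^ 2 = ‖x‖ ^ (2:ℝ) := by
    rw [show ‖x‖ ^ (2:ℝ) = ‖x‖ ^ (2:ℕ) by rw [← Real.rpow_natCast ‖x‖ 2]; norm_num,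
      ← real_inner_self_eq_norm_sq]
    simp [PiLp.inner_apply, RCLike.inner_apply, conj_trivial, sq]
    rw [EuclideanSpace.norm_eq, Real.mul_self_sqrt (by positivity)]
    simp [sq]
  have hcomb : ‖x‖ ^ (-(p - 1) * s - p - 2) * ‖x‖ ^ (2:ℝ) = ‖x‖ ^ (-(p - 1) * s - p) := by
    rw [← Real.rpow_add (norm_pos_iff.2 hx0),
      show (-(p - 1) * s - p - 2 + 2 : ℝ) = -(p - 1) * s - p by ring]
  rw [hx2]
  linear_combination (s ^ (p - 1) * (∏ i, |x i| ^ A i) * (-(p - 1) * s - p)) * hcomb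
end

section
/- Let N ≥ 1, p > 1, let Ω ⊆ ℝ^N be a bounded, open, connected set, and let w : ℝ^N → ℝ be measurable, locally integrable, with w(x) > 0 for Lebesgue-almost every x. Let u, v : ℝ^N → ℝ be continuously differentiable, suppose u ≤ v on the topological boundary ∂Ω, and suppose that for every nonnegative Lipschitz function φ : ℝ^N → ℝ vanishing on ℝ^N \ Ω one has ∫_Ω (‖∇u(x)‖^{p-2} ∇u(x) - ‖∇v(x)‖^{p-2} ∇v(x)) · ∇φ(x) · w(x) dx ≤ 0 (where ∇φ denotes the almost-everywhere defined gradient of φ). Then u ≤ v everywhere on Ω. -/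
open MeasureTheory
open scoped RealInnerProductSpace

lemma aux16_frontier {X : Type*} [TopologicalSpace X] {s t : Set X}
    (hs : IsPreconnected s) (h1 : (s ∩ t).Nonempty) (h2 : (s \ t).Nonempty) :
    (s ∩ frontier t).Nonempty := by
  by_contra h
  rw [Set.not_nonempty_iff_eq_empty] at h
  have hmem : ∀ x ∈ s, x ∉ frontier t := fun x hx hf =>
    Set.eq_empty_iff_forall_notMem.mp h x ⟨hx, hf⟩
  have hin : ∀ x ∈ s, x ∈ t → x ∈ interior t := by
    intro x hx hxt
    have := hmem x hx
    rw [frontier, Set.mem_diff] at this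
    push_neg at this
    exact this (subset_closure hxt)
  have hout : ∀ x ∈ s, x ∉ t → x ∈ interior tᶜ := by
    intro x hx hxt
    have := hmem x hx
    rw [← frontier_compl] at this
    rw [frontier, Set.mem_diff] at this
    push_neg at this
    exact this (subset_closure hxt)
  obtain ⟨x1, hx1s, hx1t⟩ := h1
  obtain ⟨x2, hx2s, hx2t⟩ := h2
  have hsub : s ⊆ interior t ∪ interior tᶜ := by
    intro x hx
    by_cases hxt : x ∈ t
    · exact Or.inl (hin x hx hxt)
    · exact Or.inr (hout x hx hxt)
  obtain ⟨y, -, hy1, hy2⟩ := hs (interior t) (interior tᶜ) isOpen_interior isOpen_interior hsub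
    ⟨x1, hx1s, hin x1 hx1s hx1t⟩ ⟨x2, hx2s, hout x2 hx2s hx2t⟩
  exact (interior_subset hy2) (interior_subset hy1)

lemma aux16_mono_pos {E : Type*} [NormedAddCommGroup E] [InnerProductSpace ℝ E]
    {p : ℝ} (hp : 1 < p) {a b : E} (hne : a ≠ b) :
    0 < ⟪(‖a‖ ^ (p - 2)) • a - (‖b‖ ^ (p - 2)) • b, a - b⟫ := by
  have hexp : ⟪(‖a‖ ^ (p - 2)) • a - (‖b‖ ^ (p - 2)) • b, a - b⟫
      = ‖a‖ ^ (p - 2) * (‖a‖ * ‖a‖) + ‖b‖ ^ (p - 2) * (‖b‖ * ‖b‖)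
        - (‖a‖ ^ (p - 2) + ‖b‖ ^ (p - 2)) * ⟪a, b⟫ := by
    rw [inner_sub_left, inner_sub_right, inner_sub_right, real_inner_smul_left,
      real_inner_smul_left, real_inner_smul_left, real_inner_smul_left,
      real_inner_self_eq_norm_mul_norm, real_inner_self_eq_norm_mul_norm,
      real_inner_comm b a]
    ring
  rw [hexp]
  rcases eq_or_ne a 0 with ha | ha
  · have hb : b ≠ 0 := by rintro rfl; exact hne (ha.trans rfl)
    have hbn : 0 < ‖b‖ := norm_pos_iff.mpr hb
    have h1 : ⟪a, b⟫ = 0 := by rw [ha, inner_zero_left]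
    have h2 : ‖a‖ = 0 := by rw [ha, norm_zero]
    rw [h1, h2]
    have : (0:ℝ) < ‖b‖ ^ (p - 2) * (‖b‖ * ‖b‖) :=
      mul_pos (Real.rpow_pos_of_pos hbn _) (mul_pos hbn hbn)
    nlinarith
  · rcases eq_or_ne b 0 with hb | hb
    · have han : 0 < ‖a‖ := norm_pos_iff.mpr ha
      have h1 : ⟪a, b⟫ = 0 := by rw [hb, inner_zero_right]
      have h2 : ‖b‖ = 0 := by rw [hb, norm_zero]
      rw [h1, h2]
      have : (0:ℝ) < ‖a‖ ^ (p - 2) * (‖a‖ * ‖a‖) :=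
        mul_pos (Real.rpow_pos_of_pos han _) (mul_pos han han)
      nlinarith
    · set s := ‖a‖ with hs
      set t := ‖b‖ with ht
      have hsn : 0 < s := norm_pos_iff.mpr ha
      have htn : 0 < t := norm_pos_iff.mpr hb
      have hsp : 0 < s ^ (p - 2) := Real.rpow_pos_of_pos hsn _
      have htp : 0 < t ^ (p - 2) := Real.rpow_pos_of_pos htn _
      have hes : s ^ (p - 2) * s = s ^ (p - 1) := by
        rw [← Real.rpow_add_one hsn.ne' (p - 2)]; ring_nf
      have het : t ^ (p - 2) * t = t ^ (p - 1) := by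
        rw [← Real.rpow_add_one htn.ne' (p - 2)]; ring_nf
      have hCS : ⟪a, b⟫ ≤ s * t := real_inner_le_norm a b
      have hkey : 0 ≤ (s ^ (p - 1) - t ^ (p - 1)) * (s - t) := by
        rcases le_total s t with hle | hle
        · have := Real.rpow_le_rpow hsn.le hle (by linarith : (0:ℝ) ≤ p - 1)
          nlinarith
        · have := Real.rpow_le_rpow htn.le hle (by linarith : (0:ℝ) ≤ p - 1)
          nlinarith
      rcases eq_or_lt_of_le hCS with heq | hlt
      · have hst : s ≠ t := by
          intro hst
          have h2 : ‖b‖ • a = ‖a‖ • b := inner_eq_norm_mul_iff_real.mp heq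
          rw [← hs, ← ht, ← hst] at h2
          exact hne (smul_right_injective E hsn.ne' h2)
        have hkey2 : 0 < (s ^ (p - 1) - t ^ (p - 1)) * (s - t) := by
          rcases lt_or_gt_of_ne hst with hlt2 | hlt2
          · have := Real.rpow_lt_rpow hsn.le hlt2 (by linarith : (0:ℝ) < p - 1)
            nlinarith
          · have := Real.rpow_lt_rpow htn.le hlt2 (by linarith : (0:ℝ) < p - 1)
            nlinarith
        nlinarith [hes, het]
      · have h1 : 0 < (s ^ (p - 2) + t ^ (p - 2)) * (s * t - ⟪a, b⟫) :=
          mul_pos (by linarith) (by linarith)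
        nlinarith [hes, het]

lemma aux16_mono_nonneg {E : Type*} [NormedAddCommGroup E] [InnerProductSpace ℝ E]
    {p : ℝ} (hp : 1 < p) (a b : E) :
    0 ≤ ⟪(‖a‖ ^ (p - 2)) • a - (‖b‖ ^ (p - 2)) • b, a - b⟫ := by
  rcases eq_or_ne a b with rfl | hne
  · simp
  · exact (aux16_mono_pos hp hne).le

lemma aux16_A_norm_le {E : Type*} [NormedAddCommGroup E] [InnerProductSpace ℝ E]
    {p : ℝ} (hp : 1 < p) {z : E} {M : ℝ} (hz : ‖z‖ ≤ M) :
    ‖(‖z‖ ^ (p - 2)) • z‖ ≤ M ^ (p - 1) := by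
  have hM : 0 ≤ M := le_trans (norm_nonneg z) hz
  rcases eq_or_ne z 0 with rfl | hz0
  · simp only [smul_zero, norm_zero]
    exact Real.rpow_nonneg hM _
  · have hzpos : 0 < ‖z‖ := norm_pos_iff.mpr hz0
    rw [norm_smul, Real.norm_eq_abs, abs_of_nonneg (Real.rpow_nonneg (norm_nonneg z) _)]
    have he : ‖z‖ ^ (p - 2) * ‖z‖ = ‖z‖ ^ (p - 1) := by
      rw [← Real.rpow_add_one hzpos.ne' (p - 2)]; ring_nf
    rw [he]
    exact Real.rpow_le_rpow (norm_nonneg z) hz (by linarith)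

set_option maxHeartbeats 1000000 in
/-- Comparison principle for the weighted `p`-Laplace operator: if `Ω ⊆ ℝ^N` is bounded,
open and connected, `w` is a measurable, locally integrable, a.e.-positive weight,
`u, v` are `C¹`, `u ≤ v` on `∂Ω`, and
`∫_Ω (‖∇u‖^{p-2}∇u - ‖∇v‖^{p-2}∇v) · ∇φ · w ≤ 0` for every nonnegative Lipschitz `φ`
vanishing outside `Ω`, then `u ≤ v` on `Ω`. -/
theorem stmt_16 (N : ℕ) (hN : 1 ≤ N) (p : ℝ) (hp : 1 < p)
    (Ω : Set (EuclideanSpace ℝ (Fin N)))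
    (hΩb : Bornology.IsBounded Ω) (hΩo : IsOpen Ω) (hΩc : IsConnected Ω)
    (w : EuclideanSpace ℝ (Fin N) → ℝ) (hwmeas : Measurable w)
    (hwloc : LocallyIntegrable w volume) (hwpos : ∀ᵐ x, 0 < w x)
    (u v : EuclideanSpace ℝ (Fin N) → ℝ)
    (hu : ContDiff ℝ 1 u) (hv : ContDiff ℝ 1 v)
    (hbd : ∀ x ∈ frontier Ω, u x ≤ v x)
    (hweak : ∀ φ : EuclideanSpace ℝ (Fin N) → ℝ,
      (∃ K, LipschitzWith K φ) → (∀ x, 0 ≤ φ x) → (∀ x ∉ Ω, φ x = 0) →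
      (∫ x in Ω,
        ⟪(‖gradient u x‖ ^ (p - 2)) • gradient u x -
            (‖gradient v x‖ ^ (p - 2)) • gradient v x, gradient φ x⟫ * w x) ≤ 0) :
    ∀ x ∈ Ω, u x ≤ v x := by
  classical
  intro x0 hx0
  by_contra hcon
  push_neg at hcon
  set g : EuclideanSpace ℝ (Fin N) → ℝ := fun x => u x - v x with hgdef
  have hg1 : ContDiff ℝ 1 g := hu.sub hv
  have hgd : Differentiable ℝ g := hg1.differentiable one_ne_zero
  have hud : Differentiable ℝ u := hu.differentiable one_ne_zero
  have hvd : Differentiable ℝ v := hv.differentiable one_ne_zero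
  have hgc : Continuous g := hg1.continuous
  have hgradientdef : ∀ (f : EuclideanSpace ℝ (Fin N) → ℝ) x,
      gradient f x = (InnerProductSpace.toDual ℝ _).symm (fderiv ℝ f x) := fun _ _ => rfl
  -- bounded region
  obtain ⟨R, hR⟩ := (Metric.isBounded_iff_subset_closedBall 0).mp hΩb
  have hclos : closure Ω ⊆ Metric.closedBall 0 R :=
    closure_minimal hR Metric.isClosed_closedBall
  set B := Metric.closedBall (0 : EuclideanSpace ℝ (Fin N)) (R + 1) with hBdef
  have hΩB : Ω ⊆ B := hR.trans (Metric.closedBall_subset_closedBall (by linarith))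
  have hclosB : closure Ω ⊆ B :=
    hclos.trans (Metric.closedBall_subset_closedBall (by linarith))
  have hBcomp : IsCompact B := isCompact_closedBall _ _
  have hBconv : Convex ℝ B := convex_closedBall _ _
  -- Lipschitz constant
  obtain ⟨C0, hC0⟩ := hBcomp.exists_bound_of_continuousOn
    (hg1.continuous_fderiv one_ne_zero).continuousOn
  set C := max C0 0 with hCdef
  have hC0' : ∀ x ∈ B, ‖fderiv ℝ g x‖ ≤ C := fun x hx =>
    le_trans (hC0 x hx) (le_max_left _ _)
  have hCnn : (0:ℝ) ≤ C := le_max_right _ _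
  have hgl : ∀ x ∈ B, ∀ y ∈ B, ‖g x - g y‖ ≤ C * ‖x - y‖ := by
    intro x hx y hy
    exact hBconv.norm_image_sub_le_of_norm_fderiv_le (fun z _ => hgd z) hC0' hy hx
  -- test function
  set φ : EuclideanSpace ℝ (Fin N) → ℝ := Set.indicator Ω (fun x => max (g x) 0) with hφdef
  have hφ_mem : ∀ x ∈ Ω, φ x = max (g x) 0 := fun x hx => Set.indicator_of_mem hx _
  have hφ_nmem : ∀ x ∉ Ω, φ x = 0 := fun x hx => Set.indicator_of_notMem hx _
  have hφnn : ∀ x, 0 ≤ φ x := by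
    intro x; by_cases hx : x ∈ Ω
    · rw [hφ_mem x hx]; exact le_max_right _ _
    · rw [hφ_nmem x hx]
  have hfront : ∀ z ∈ frontier Ω, g z ≤ 0 := fun z hz => sub_nonpos.mpr (hbd z hz)
  have hkey : ∀ x y, φ x - φ y ≤ C * ‖x - y‖ := by
    intro x y
    have hrhs : 0 ≤ C * ‖x - y‖ := mul_nonneg hCnn (norm_nonneg _)
    by_cases hx : x ∈ Ω
    · rw [hφ_mem x hx]
      rcases le_or_gt (g x) 0 with hgx | hgx
      · rw [max_eq_right hgx]; have := hφnn y; linarith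
      · rw [max_eq_left hgx.le]
        by_cases hy : y ∈ Ω
        · rw [hφ_mem y hy]
          have h1 : g y ≤ max (g y) 0 := le_max_left _ _
          have h2 : g x - g y ≤ ‖g x - g y‖ := le_trans (le_abs_self _) (by rw [Real.norm_eq_abs])
          have h3 := hgl x (hΩB hx) y (hΩB hy)
          linarith
        · rw [hφ_nmem y hy]
          obtain ⟨z, hzseg, hzf⟩ := aux16_frontier (convex_segment x y).isPreconnected
            ⟨x, left_mem_segment ℝ x y, hx⟩ ⟨y, right_mem_segment ℝ x y, hy⟩
          have hgz : g z ≤ 0 := hfront z hzf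
          have hzB : z ∈ B := hclosB (frontier_subset_closure hzf)
          have hdist : ‖x - z‖ ≤ ‖x - y‖ := by
            have h := dist_add_dist_of_mem_segment hzseg
            rw [dist_eq_norm, dist_eq_norm, dist_eq_norm] at h
            have := norm_nonneg (z - y)
            linarith
          have h2 := hgl x (hΩB hx) z hzB
          have h3 : g x - g z ≤ ‖g x - g z‖ := le_trans (le_abs_self _) (by rw [Real.norm_eq_abs])
          have h4 : C * ‖x - z‖ ≤ C * ‖x - y‖ := mul_le_mul_of_nonneg_left hdist hCnn
          linarith
    · rw [hφ_nmem x hx]; have := hφnn y; linarith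
  have hφlip : LipschitzWith (Real.toNNReal C) φ := by
    apply LipschitzWith.of_dist_le_mul
    intro x y
    rw [Real.dist_eq, dist_eq_norm, Real.coe_toNNReal C hCnn]
    rw [abs_sub_le_iff]
    refine ⟨hkey x y, ?_⟩
    rw [norm_sub_rev]
    exact hkey y x
  -- gradient facts for φ
  have hφgrad0 : ∀ x, φ x = 0 → gradient φ x = 0 := by
    intro x hx
    by_cases hd : DifferentiableAt ℝ φ x
    · have hmin : IsLocalMin φ x := Filter.Eventually.of_forall (fun y => hx ▸ hφnn y)
      rw [hgradientdef, hmin.fderiv_eq_zero, map_zero]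
    · exact gradient_eq_zero_of_not_differentiableAt hd
  set U : Set (EuclideanSpace ℝ (Fin N)) := {x | x ∈ Ω ∧ 0 < g x} with hUdef
  have hUopen : IsOpen U := by
    have hU : U = Ω ∩ g ⁻¹' (Set.Ioi 0) := rfl
    rw [hU]
    exact hΩo.inter (isOpen_Ioi.preimage hgc)
  have hφgradU : ∀ x ∈ U, gradient φ x = gradient u x - gradient v x := by
    intro x hx
    have hev : φ =ᶠ[nhds x] g := by
      filter_upwards [hUopen.mem_nhds hx] with y hy
      rw [hφ_mem y hy.1, max_eq_left hy.2.le]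
    have hfd : fderiv ℝ φ x = fderiv ℝ g x := hev.fderiv_eq
    have hfg : fderiv ℝ g x = fderiv ℝ u x - fderiv ℝ v x := fderiv_sub (hud x) (hvd x)
    rw [hgradientdef, hfd, hfg, map_sub]
    rfl
  -- continuity and measurability of gradients
  have hgradu_cont : Continuous (gradient u) := by
    show Continuous fun x => (InnerProductSpace.toDual ℝ _).symm (fderiv ℝ u x)
    exact (InnerProductSpace.toDual ℝ _).symm.continuous.comp (hu.continuous_fderiv one_ne_zero)
  have hgradv_cont : Continuous (gradient v) := by
    show Continuous fun x => (InnerProductSpace.toDual ℝ _).symm (fderiv ℝ v x)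
    exact (InnerProductSpace.toDual ℝ _).symm.continuous.comp (hv.continuous_fderiv one_ne_zero)
  have hφgradmeas : Measurable (gradient φ) := by
    show Measurable fun x => (InnerProductSpace.toDual ℝ _).symm (fderiv ℝ φ x)
    exact ((InnerProductSpace.toDual ℝ _).symm.continuous.measurable).comp (measurable_fderiv ℝ φ)
  have hrpow_meas : Measurable (fun t : ℝ => t ^ (p - 2)) := by
    apply measurable_of_continuousOn_compl_singleton (0:ℝ)
    exact ContinuousOn.rpow_const continuousOn_id (fun x hx => Or.inl hx)
  set Y : EuclideanSpace ℝ (Fin N) → EuclideanSpace ℝ (Fin N) :=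
    fun x => (‖gradient u x‖ ^ (p - 2)) • gradient u x -
      (‖gradient v x‖ ^ (p - 2)) • gradient v x with hYdef
  have hYmeas : Measurable Y := by
    apply Measurable.sub
    · exact ((hrpow_meas.comp hgradu_cont.norm.measurable).smul hgradu_cont.measurable)
    · exact ((hrpow_meas.comp hgradv_cont.norm.measurable).smul hgradv_cont.measurable)
  -- bounds
  obtain ⟨Mu, hMu⟩ := hBcomp.exists_bound_of_continuousOn hgradu_cont.continuousOn
  obtain ⟨Mv, hMv⟩ := hBcomp.exists_bound_of_continuousOn hgradv_cont.continuousOn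
  set D : ℝ := (max Mu 0) ^ (p - 1) + (max Mv 0) ^ (p - 1) with hDdef
  have hDnn : 0 ≤ D := add_nonneg (Real.rpow_nonneg (le_max_right _ _) _)
    (Real.rpow_nonneg (le_max_right _ _) _)
  have hYbound : ∀ x ∈ B, ‖Y x‖ ≤ D := by
    intro x hx
    refine le_trans (norm_sub_le _ _) ?_
    exact add_le_add
      (aux16_A_norm_le hp (le_trans (hMu x hx) (le_max_left _ _)))
      (aux16_A_norm_le hp (le_trans (hMv x hx) (le_max_left _ _)))
  have hφgradnorm : ∀ x, ‖gradient φ x‖ ≤ C := by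
    intro x
    have h1 : ‖gradient φ x‖ = ‖fderiv ℝ φ x‖ := by
      rw [hgradientdef]; exact LinearIsometryEquiv.norm_map _ _
    rw [h1]
    have := norm_fderiv_le_of_lipschitz ℝ hφlip (x₀ := x)
    rwa [Real.coe_toNNReal C hCnn] at this
  -- integrability
  have hcompclos : IsCompact (closure Ω) :=
    Metric.isCompact_of_isClosed_isBounded isClosed_closure hΩb.closure
  have hwint : IntegrableOn w Ω volume :=
    (hwloc.integrableOn_isCompact hcompclos).mono_set subset_closure
  have hFmeas : Measurable fun x => ⟪Y x, gradient φ x⟫ * w x :=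
    (hYmeas.inner hφgradmeas).mul hwmeas
  have hFint : IntegrableOn (fun x => ⟪Y x, gradient φ x⟫ * w x) Ω volume := by
    apply Integrable.mono' ((hwint.abs).const_mul (D * C))
    · exact hFmeas.aestronglyMeasurable
    · filter_upwards [ae_restrict_mem hΩo.measurableSet] with x hx
      rw [Real.norm_eq_abs, abs_mul]
      have h1 : |⟪Y x, gradient φ x⟫| ≤ D * C := by
        refine le_trans (abs_real_inner_le_norm _ _) ?_
        exact mul_le_mul (hYbound x (hΩB hx)) (hφgradnorm x) (norm_nonneg _) hDnn
      exact mul_le_mul_of_nonneg_right h1 (abs_nonneg _)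
  -- weak inequality
  have hint : (∫ x in Ω, ⟪Y x, gradient φ x⟫ * w x) ≤ 0 :=
    hweak φ ⟨_, hφlip⟩ hφnn hφ_nmem
  have hinner_nonneg : ∀ x ∈ Ω, 0 ≤ ⟪Y x, gradient φ x⟫ := by
    intro x hx
    rcases le_or_gt (g x) 0 with hgx | hgx
    · have hz : φ x = 0 := by rw [hφ_mem x hx, max_eq_right hgx]
      rw [hφgrad0 x hz, inner_zero_right]
    · rw [hφgradU x ⟨hx, hgx⟩]
      exact aux16_mono_nonneg hp _ _
  have hFnonneg : ∀ᵐ x ∂(volume.restrict Ω), 0 ≤ ⟪Y x, gradient φ x⟫ * w x := by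
    filter_upwards [ae_restrict_mem hΩo.measurableSet, ae_restrict_of_ae hwpos] with x hx hw
    exact mul_nonneg (hinner_nonneg x hx) hw.le
  have hzero : (∫ x in Ω, ⟪Y x, gradient φ x⟫ * w x) = 0 :=
    le_antisymm hint (integral_nonneg_of_ae hFnonneg)
  have hae0 : ∀ᵐ x ∂(volume.restrict Ω), ⟪Y x, gradient φ x⟫ * w x = 0 := by
    have h := (integral_eq_zero_iff_of_nonneg_ae hFnonneg hFint).mp hzero
    filter_upwards [h] with x hx using hx
  have haeinner : ∀ᵐ x ∂(volume.restrict Ω), ⟪Y x, gradient φ x⟫ = 0 := by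
    filter_upwards [hae0, ae_restrict_of_ae hwpos] with x h1 h2
    rcases mul_eq_zero.mp h1 with h | h
    · exact h
    · exact absurd h h2.ne'
  -- the bad set is empty
  set S : Set (EuclideanSpace ℝ (Fin N)) :=
    (Ω ∩ g ⁻¹' (Set.Ioi 0)) ∩ {x | gradient u x ≠ gradient v x} with hSdef
  have hSopen : IsOpen S :=
    (hΩo.inter (isOpen_Ioi.preimage hgc)).inter (isOpen_ne_fun hgradu_cont hgradv_cont)
  have hS0 : volume S = 0 := by
    have h1 : ∀ᵐ x, x ∈ Ω → ⟪Y x, gradient φ x⟫ = 0 :=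
      (ae_restrict_iff' hΩo.measurableSet).mp haeinner
    have h2 : volume {x | ¬ (x ∈ Ω → ⟪Y x, gradient φ x⟫ = 0)} = 0 := ae_iff.mp h1
    refine measure_mono_null ?_ h2
    rintro x ⟨⟨hx1, hx2⟩, hx3⟩
    simp only [Set.mem_setOf_eq]
    intro himp
    apply (aux16_mono_pos hp hx3).ne'
    rw [← hφgradU x ⟨hx1, hx2⟩]
    exact himp hx1
  have hSempty : S = ∅ := hSopen.eq_empty_of_measure_zero hS0
  have hgradeq : ∀ x ∈ Ω, 0 < g x → fderiv ℝ g x = 0 := by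
    intro x hx hgx
    have hguv : gradient u x = gradient v x := by
      by_contra hne
      have hxS : x ∈ S := ⟨⟨hx, hgx⟩, hne⟩
      rw [hSempty] at hxS
      exact hxS
    have hfd : fderiv ℝ u x = fderiv ℝ v x := by
      rw [hgradientdef, hgradientdef] at hguv
      exact (InnerProductSpace.toDual ℝ _).symm.injective hguv
    have hsub : fderiv ℝ g x = fderiv ℝ u x - fderiv ℝ v x := fderiv_sub (hud x) (hvd x)
    rw [hsub, hfd, sub_self]
  -- endgame
  set c := g x0 with hcdef
  have hcpos : 0 < c := sub_pos.mpr hcon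
  set M : Set (EuclideanSpace ℝ (Fin N)) := closure Ω ∩ g ⁻¹' {c} with hMdef
  have hMsubΩ : M ⊆ Ω := by
    rintro z ⟨hz1, hz2⟩
    by_cases hzi : z ∈ interior Ω
    · rwa [hΩo.interior_eq] at hzi
    · have hzf : z ∈ frontier Ω := ⟨hz1, hzi⟩
      have h5 := hfront z hzf
      have hgz : g z = c := hz2
      linarith
  have hMopen : IsOpen M := by
    rw [Metric.isOpen_iff]
    rintro z ⟨hz1, hz2⟩
    have hzΩ : z ∈ Ω := hMsubΩ ⟨hz1, hz2⟩
    have hgz : g z = c := hz2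
    have hzU : z ∈ U := ⟨hzΩ, by rw [hgz]; exact hcpos⟩
    obtain ⟨ε, hεpos, hball⟩ := Metric.isOpen_iff.mp hUopen z hzU
    refine ⟨ε, hεpos, ?_⟩
    intro y hy
    have hconst : g y = g z :=
      (convex_ball z ε).is_const_of_fderivWithin_eq_zero
        hgd.differentiableOn
        (fun t ht => by
          rw [fderivWithin_of_isOpen Metric.isOpen_ball ht]
          exact hgradeq t (hball ht).1 (hball ht).2)
        hy (Metric.mem_ball_self hεpos)
    exact ⟨subset_closure (hball hy).1,
      by rw [Set.mem_preimage, Set.mem_singleton_iff, hconst, hgz]⟩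
  have hMclosed : IsClosed M := isClosed_closure.inter (isClosed_singleton.preimage hgc)
  haveI : Nontrivial (EuclideanSpace ℝ (Fin N)) := by
    refine ⟨EuclideanSpace.single (⟨0, hN⟩ : Fin N) (1:ℝ), 0, fun h => ?_⟩
    have h6 := congrArg norm h
    rw [EuclideanSpace.norm_single, norm_zero, norm_one] at h6
    exact one_ne_zero h6
  have hMne : M.Nonempty := ⟨x0, subset_closure hx0, rfl⟩
  have huniv : M = Set.univ := (IsClopen.eq_univ ⟨hMclosed, hMopen⟩) hMne
  obtain ⟨zz, hzz⟩ := NormedSpace.exists_lt_norm ℝ (EuclideanSpace ℝ (Fin N)) R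
  have hzzM : zz ∈ M := huniv ▸ Set.mem_univ zz
  have h7 := hclos hzzM.1
  rw [Metric.mem_closedBall, dist_zero_right] at h7
  linarith
end
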